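/- Let A be a commutative ring, B and C commutative A-algebras, and f : C → B a flat ring homomorphism. Let φ₁, …, φ_k ∈ C be elements that are non-zero-divisors in C (hence, by flatness, their images are non-zero-divisors in B). If for each single φ_i the induced map C/(φ_i) → B/(φ_i·B) is an isomorphism, then for every product φ_{i₁} ⋯ φ_{i_k} the induced map C/(φ_{i₁}⋯φ_{i_k}) → B/(φ_{i₁}⋯φ_{i_k}·B) is an isomorphism. -/

import Mathlib

section Aux

variable {C B : Type*} [CommRing C] [CommRing B] [Algebra C B]

/-- Elementwise characterization of bijectivity of the induced map
`C/(x) → B/(x·B)`. -/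
lemma bij_quotientMap_iff (x : C) :
    Function.Bijective
      (Ideal.quotientMap ((Ideal.span {x}).map (algebraMap C B))
        (algebraMap C B) Ideal.le_comap_map) ↔
    (∀ y : C, algebraMap C B x ∣ algebraMap C B y → x ∣ y) ∧
    (∀ b : B, ∃ y : C, algebraMap C B x ∣ b - algebraMap C B y) := by
  have hmap : (Ideal.span {x}).map (algebraMap C B)
      = Ideal.span {algebraMap C B x} := by
    rw [Ideal.map_span, Set.image_singleton]
  constructor
  · rintro ⟨hinj, hsurj⟩
    constructor
    · intro y hy
      have h0 : (Ideal.quotientMap ((Ideal.span {x}).map (algebraMap C B))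
          (algebraMap C B) Ideal.le_comap_map) (Ideal.Quotient.mk _ y) = 0 := by
        rw [Ideal.quotientMap_mk]
        rw [Ideal.Quotient.eq_zero_iff_mem, hmap, Ideal.mem_span_singleton]
        exact hy
      have := hinj (by rw [h0, map_zero] : _ = (Ideal.quotientMap _ _ _) 0)
      rw [← Ideal.mem_span_singleton, ← Ideal.Quotient.eq_zero_iff_mem]
      exact this
    · intro b
      obtain ⟨yq, hyq⟩ := hsurj (Ideal.Quotient.mk _ b)
      obtain ⟨y, rfl⟩ := Ideal.Quotient.mk_surjective yq
      rw [Ideal.quotientMap_mk, Ideal.Quotient.mk_eq_mk_iff_sub_mem, hmap,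
        Ideal.mem_span_singleton] at hyq
      exact ⟨y, dvd_sub_comm.mp hyq⟩
  · rintro ⟨hinj, hsurj⟩
    constructor
    · intro a b hab
      obtain ⟨y, rfl⟩ := Ideal.Quotient.mk_surjective a
      obtain ⟨z, rfl⟩ := Ideal.Quotient.mk_surjective b
      rw [Ideal.quotientMap_mk, Ideal.quotientMap_mk,
        Ideal.Quotient.mk_eq_mk_iff_sub_mem, hmap, Ideal.mem_span_singleton,
        ← map_sub] at hab
      rw [Ideal.Quotient.mk_eq_mk_iff_sub_mem, Ideal.mem_span_singleton]
      exact hinj _ hab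
    · intro bq
      obtain ⟨b, rfl⟩ := Ideal.Quotient.mk_surjective bq
      obtain ⟨y, hy⟩ := hsurj b
      refine ⟨Ideal.Quotient.mk _ y, ?_⟩
      rw [Ideal.quotientMap_mk, Ideal.Quotient.mk_eq_mk_iff_sub_mem, hmap,
        Ideal.mem_span_singleton]
      exact dvd_sub_comm.mp hy

end Aux

theorem stmt0 (A C B : Type*) [CommRing A] [CommRing C] [CommRing B]
    [Algebra A C] [Algebra A B] [Algebra C B] [Module.Flat C B]
    (k : ℕ) (φ : Fin k → C) (hreg : ∀ i, φ i ∈ nonZeroDivisors C)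
    (hiso : ∀ i, Function.Bijective
      (Ideal.quotientMap ((Ideal.span {φ i}).map (algebraMap C B))
        (algebraMap C B) Ideal.le_comap_map))
    (l : List (Fin k)) :
    Function.Bijective
      (Ideal.quotientMap ((Ideal.span {(l.map φ).prod}).map (algebraMap C B))
        (algebraMap C B) Ideal.le_comap_map) := by
  rw [bij_quotientMap_iff]
  induction l with
  | nil =>
    simp only [List.map_nil, List.prod_nil]
    exact ⟨fun y _ => one_dvd y, fun b => ⟨0, by simp⟩⟩
  | cons i l ih =>
    simp only [List.map_cons, List.prod_cons] at *
    set c := φ i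
    set d := (l.map φ).prod
    have hi := (bij_quotientMap_iff (B := B) c).mp (hiso i)
    -- `algebraMap C B c` is regular in `B`:
    have hcreg : ∀ b b' : B, algebraMap C B c * b = algebraMap C B c * b' → b = b' := by
      have hC : IsSMulRegular C c := by
        intro u v huv
        simp only [smul_eq_mul] at huv
        have h0 : (u - v) * c = 0 := by
          rw [sub_mul, mul_comm u c, mul_comm v c, huv, sub_self]
        exact sub_eq_zero.mp ((hreg i).2 _ h0)
      have hB : IsSMulRegular B c := by
        have h1 := hC.rTensor (R := C) B
        exact h1.of_injective (TensorProduct.lid C B).symm.toLinearMap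
          (TensorProduct.lid C B).symm.injective
      intro b b' h
      apply hB
      simpa only [Algebra.smul_def] using h
    constructor
    · intro y hy
      obtain ⟨b, hb⟩ := hy
      have hcy : algebraMap C B c ∣ algebraMap C B y := ⟨algebraMap C B d * b, by
        rw [hb, map_mul]; ring⟩
      obtain ⟨y₁, rfl⟩ := hi.1 y hcy
      rw [map_mul, map_mul, mul_assoc] at hb
      have : algebraMap C B y₁ = algebraMap C B d * b := hcreg _ _ hb
      obtain ⟨z, rfl⟩ := ih.1 y₁ ⟨b, this⟩
      exact ⟨z, by ring⟩
    · intro b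
      obtain ⟨y₁, b', hb'⟩ := hi.2 b
      obtain ⟨y₂, b'', hb''⟩ := ih.2 b'
      refine ⟨y₁ + c * y₂, b'', ?_⟩
      have : b - algebraMap C B (y₁ + c * y₂)
          = algebraMap C B c * (b' - algebraMap C B y₂) := by
        rw [map_add, map_mul]; linear_combination hb'
      rw [this, hb'', map_mul]; ring
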